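/- Let 1 < d₁ ≤ κ with d₁ ≥ d₂ ≥ … ≥ d_N > 0, and h_i(u) = |min(κu, max(d_i, max(1,u))) - d_i|, G₁(u) = Σ h_i(u)². Then u* = d₁/κ is a minimizer of G₁ over [1/κ, ∞). -/
import Mathlib


/-- Case `1 < d₁ ≤ κ` of the Frobenius-norm reduced problem: `u* = d₁/κ` is a
minimizer of `G₁` over `[1/κ, ∞)`. -/
theorem G1_min_d1_le_kappa (N : ℕ) (hN : 0 < N) (d : ℕ → ℝ) (κ : ℝ)
    (hdpos : ∀ i < N, 0 < d i)
    (hdec : ∀ i j, i ≤ j → j < N → d j ≤ d i)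
    (hd1 : 1 < d 0) (hd1κ : d 0 ≤ κ)
    (G : ℝ → ℝ)
    (hG : ∀ u, G u = ∑ i ∈ Finset.range N,
      (|min (κ * u) (max (d i) (max 1 u)) - d i|) ^ 2) :
    ∀ u ∈ Set.Ici (1 / κ), G (d 0 / κ) ≤ G u := by
  intro u hu
  have hu' : 1 / κ ≤ u := hu
  have hκ : (1:ℝ) < κ := lt_of_lt_of_le hd1 hd1κ
  have hκ0 : (0:ℝ) < κ := by linarith
  rw [hG, hG]
  apply Finset.sum_le_sum
  intro i hi
  rw [Finset.mem_range] at hi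
  have hdi : d i ≤ d 0 := hdec 0 i (Nat.zero_le i) hi
  have h1 : κ * (d 0 / κ) = d 0 := by field_simp
  have h2 : max 1 (d 0 / κ) = 1 := max_eq_left (by rw [div_le_one hκ0]; linarith)
  rw [h1, h2]
  have h3 : max (d i) 1 ≤ d 0 := max_le hdi (le_of_lt hd1)
  rw [min_eq_right h3]
  have h5 : (0:ℝ) ≤ max (d i) 1 - d i := by
    have := le_max_left (d i) 1; linarith
  rw [abs_of_nonneg h5]
  have hlam : 1 ≤ min (κ * u) (max (d i) (max 1 u)) := by
    apply le_min
    · calc (1:ℝ) = κ * (1/κ) := by field_simp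
      _ ≤ κ * u := by nlinarith
    · exact le_trans (le_max_left 1 u) (le_max_right (d i) _)
  have key : max (d i) 1 - d i ≤ |min (κ * u) (max (d i) (max 1 u)) - d i| := by
    rcases le_total (d i) 1 with h | h
    · rw [max_eq_right h]
      calc 1 - d i ≤ min (κ * u) (max (d i) (max 1 u)) - d i := by linarith
      _ ≤ |min (κ * u) (max (d i) (max 1 u)) - d i| := le_abs_self _
    · rw [max_eq_left h]
      simpa using abs_nonneg (min (κ * u) (max (d i) (max 1 u)) - d i)
  exact pow_le_pow_left₀ h5 key 2
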